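/- arXiv:1710.02877 — 2 statements merged into one kernel-verified Lean document; each statement's English description precedes it below -/
import Mathlib

section
/- Let G₁, …, Gₙ be NFAs whose pairwise shared events are all observable (contained in Σ_o), and let P be the projection to Σ_o. Then P(L(G₁ ‖ ⋯ ‖ Gₙ)) = P(L(G₁)) ‖ ⋯ ‖ P(L(Gₙ)), i.e., projection commutes with parallel composition of languages when all unobservable events are private. -/
/-- A nondeterministic finite automaton (all states marked): transition relation and initial states. -/
structure NFA' (Q E : Type) where
  δ : Q → E → Set Q
  I : Set Q

/-- Extended transition function on sets of states. -/
def NFA'.run {Q E : Type} (A : NFA' Q E) : List E → Set Q → Set Q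
  | [], S => S
  | a :: w, S => A.run w {q | ∃ p ∈ S, q ∈ A.δ p a}

/-- The language generated by the automaton. -/
def NFA'.lang {Q E : Type} (A : NFA' Q E) : Set (List E) :=
  {w | (A.run w A.I).Nonempty}

-- The natural projection to the observable events `S`: erase all events outside `S`.
open Classical in
noncomputable def proj {E : Type} (S : Set E) : List E → List E
  | [] => []
  | a :: w => if a ∈ S then a :: proj S w else proj S w

/-- Parallel (synchronous) composition of a family of NFAs `A i` with alphabets `S i`:
on an event `a`, every component whose alphabet contains `a` makes an `a`-transition,
all other components stay put; events outside `⋃ i, S i` are blocked. -/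
def parN {n : ℕ} {E : Type} {Qs : Fin n → Type} (S : Fin n → Set E)
    (A : ∀ i, NFA' (Qs i) E) : NFA' (∀ i, Qs i) E where
  δ := fun p a =>
    {q | (∃ i, a ∈ S i) ∧
         ∀ i, (a ∈ S i → q i ∈ (A i).δ (p i) a) ∧ (a ∉ S i → q i = p i)}
  I := {p | ∀ i, p i ∈ (A i).I}

def NFA'.path {Q E : Type} (A : NFA' Q E) : Q → List E → Q → Prop
  | p, [], q => q = p
  | p, a :: w, q => ∃ r ∈ A.δ p a, A.path r w q

lemma mem_run_iff {Q E : Type} (A : NFA' Q E) :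
    ∀ (w : List E) (T : Set Q) (q : Q),
      q ∈ A.run w T ↔ ∃ p ∈ T, A.path p w q := by
  intro w
  induction w with
  | nil => intro T q; simp [NFA'.run, NFA'.path, eq_comm]
  | cons a w ih =>
    intro T q
    simp only [NFA'.run, NFA'.path, ih]
    constructor
    · rintro ⟨r, ⟨p, hp, hr⟩, hrw⟩; exact ⟨p, hp, r, hr, hrw⟩
    · rintro ⟨p, hp, r, hr, hrw⟩; exact ⟨r, ⟨p, hp, hr⟩, hrw⟩

lemma lang_iff {Q E : Type} (A : NFA' Q E) (w : List E) :
    w ∈ A.lang ↔ ∃ p ∈ A.I, ∃ q, A.path p w q := by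
  simp only [NFA'.lang, Set.Nonempty, Set.mem_setOf_eq, mem_run_iff]
  tauto

lemma proj_proj {E : Type} (Sa Sb : Set E) (w : List E) :
    proj Sa (proj Sb w) = proj (Sa ∩ Sb) w := by
  induction w with
  | nil => simp [proj]
  | cons a w ih =>
    by_cases hb : a ∈ Sb <;> by_cases ha : a ∈ Sa <;>
      simp [proj, ha, hb, ih, Set.mem_inter_iff]

lemma mem_proj {E : Type} (Sa : Set E) (w : List E) (a : E) :
    a ∈ proj Sa w ↔ a ∈ w ∧ a ∈ Sa := by
  induction w with
  | nil => simp [proj]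
  | cons b w ih =>
    by_cases hb : b ∈ Sa <;> simp [proj, hb, ih] <;> aesop

lemma parN_path_mem {n : ℕ} {E : Type} {Qs : Fin n → Type} (S : Fin n → Set E)
    (A : ∀ i, NFA' (Qs i) E) :
    ∀ (w : List E) (p q : ∀ i, Qs i), (parN S A).path p w q →
      ∀ a ∈ w, ∃ i, a ∈ S i := by
  intro w
  induction w with
  | nil => simp
  | cons a w ih =>
    rintro p q ⟨r, ⟨⟨i, hi⟩, _⟩, hrw⟩ b hb
    rcases List.mem_cons.1 hb with rfl | hb
    · exact ⟨i, hi⟩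
    · exact ih r q hrw b hb

lemma parN_path_proj {n : ℕ} {E : Type} {Qs : Fin n → Type} (S : Fin n → Set E)
    (A : ∀ i, NFA' (Qs i) E) :
    ∀ (w : List E) (p q : ∀ i, Qs i), (parN S A).path p w q →
      ∀ i, (A i).path (p i) (proj (S i) w) (q i) := by
  intro w
  induction w with
  | nil => rintro p q rfl i; rfl
  | cons a w ih =>
    rintro p q ⟨r, ⟨_, hstep⟩, hrw⟩ i
    by_cases hi : a ∈ S i
    · simpa [proj, hi, NFA'.path] using ⟨r i, (hstep i).1 hi, ih r q hrw i⟩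
    · have := (hstep i).2 hi
      simpa [proj, hi, this] using ih r q hrw i

lemma path_mem_own {Q E : Type} (A : NFA' Q E) (Si : Set E)
    (hown : ∀ (q : Q) (a : E), a ∉ Si → A.δ q a = ∅) :
    ∀ (w : List E) (p q : Q), A.path p w q → ∀ a ∈ w, a ∈ Si := by
  intro w
  induction w with
  | nil => simp
  | cons a w ih =>
    rintro p q ⟨r, hr, hrw⟩ b hb
    rcases List.mem_cons.1 hb with rfl | hb
    · by_contra h; rw [hown p b h] at hr; exact hr
    · exact ih r q hrw b hb

lemma construct {n : ℕ} {E : Type} {Qs : Fin n → Type} (S : Fin n → Set E)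
    (So : Set E) (A : ∀ i, NFA' (Qs i) E)
    (hshared : ∀ i j, i ≠ j → S i ∩ S j ⊆ So) :
    ∀ (N : ℕ) (v : List E) (u : Fin n → List E) (p q : ∀ i, Qs i),
      (∀ a ∈ v, ∃ i, a ∈ S i ∩ So) →
      (∀ i, ∀ a ∈ u i, a ∈ S i) →
      (∀ i, proj So (u i) = proj (S i ∩ So) v) →
      (∀ i, (A i).path (p i) (u i) (q i)) →
      v.length + (∑ i, (u i).length) ≤ N →
      ∃ w, proj So w = v ∧ (parN S A).path p w q := by
  intro N
  induction N with
  | zero =>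
    intro v u p q _ _ _ hpath hN
    have hv0 : v = [] := by
      cases v with
      | nil => rfl
      | cons a v => simp at hN
    have hu0 : ∀ i, u i = [] := by
      intro i
      have h1 : (u i).length = 0 := by
        have : (u i).length ≤ ∑ j, (u j).length :=
          Finset.single_le_sum (f := fun j => (u j).length)
            (fun j _ => Nat.zero_le _) (Finset.mem_univ i)
        omega
      exact List.length_eq_zero_iff.1 h1
    refine ⟨[], by simp [proj, hv0], ?_⟩
    show q = p
    funext i
    have := hpath i
    rw [hu0 i] at this
    exact this
  | succ N ih =>
    intro v u p q hv hu hproj hpath hN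
    by_cases hpriv : ∃ i a u', u i = a :: u' ∧ a ∉ So
    · obtain ⟨i, a, u', hui, haSo⟩ := hpriv
      have haSi : a ∈ S i := hu i a (by rw [hui]; exact List.mem_cons_self)
      have hpi := hpath i
      rw [hui] at hpi
      obtain ⟨r, hr, hrw⟩ := hpi
      set p' := Function.update p i r with hp'
      set u'' := Function.update u i u' with hu''
      have hslt : ∑ j, (u'' j).length < ∑ j, (u j).length := by
        refine Finset.sum_lt_sum (fun j _ => ?_) ⟨i, Finset.mem_univ i, ?_⟩
        · by_cases hji : j = i
          · subst hji; simp [hu'', hui]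
          · simp [hu'', Function.update_of_ne hji]
        · simp [hu'', hui]
      obtain ⟨w, hw, hpw⟩ := ih v u'' p' q hv
        (by
          intro j b hb
          by_cases hji : j = i
          · subst hji
            simp only [hu'', Function.update_self] at hb
            exact hu j b (by rw [hui]; exact List.mem_cons_of_mem a hb)
          · exact hu j b (by simpa [hu'', Function.update_of_ne hji] using hb))
        (by
          intro j
          by_cases hji : j = i
          · subst hji
            have := hproj j
            rw [hui] at this
            simpa [hu'', proj, haSo] using this
          · simpa [hu'', Function.update_of_ne hji] using hproj j)
        (by
          intro j
          by_cases hji : j = i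
          · subst hji; simpa [hu'', hp'] using hrw
          · simpa [hu'', hp', Function.update_of_ne hji] using hpath j)
        (by omega)
      refine ⟨a :: w, by simpa [proj, haSo] using hw, ?_⟩
      refine ⟨p', ⟨⟨i, haSi⟩, ?_⟩, hpw⟩
      intro j
      by_cases hji : j = i
      · subst hji
        exact ⟨fun _ => by simpa [hp'] using hr, fun h => absurd haSi h⟩
      · have hjo : a ∉ S j := by
          intro hj
          exact haSo (hshared j i hji ⟨hj, haSi⟩)
        exact ⟨fun h => absurd h hjo, fun _ => by simp [hp', Function.update_of_ne hji]⟩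
    · push_neg at hpriv
      cases v with
      | nil =>
        have hu0 : ∀ i, u i = [] := by
          intro i
          cases hui : u i with
          | nil => rfl
          | cons a u' =>
            have haSo : a ∈ So := hpriv i a u' hui
            have := hproj i
            rw [hui] at this
            simp [proj, haSo] at this
        refine ⟨[], by simp [proj], ?_⟩
        show q = p
        funext i
        have := hpath i
        rw [hu0 i] at this
        exact this
      | cons a v' =>
        obtain ⟨i₀, hai₀, haSo⟩ := hv a (List.mem_cons_self)
        have key : ∀ i, ∃ (r : Qs i) (u' : List E),
            (a ∈ S i → r ∈ (A i).δ (p i) a ∧ u i = a :: u' ∧ (A i).path r u' (q i)) ∧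
            (a ∉ S i → r = p i ∧ u' = u i) := by
          intro i
          by_cases hi : a ∈ S i
          · have hpr : proj So (u i) = a :: proj (S i ∩ So) v' := by
              rw [hproj i]; simp [proj, Set.mem_inter_iff, hi, haSo]
            cases hui : u i with
            | nil => rw [hui] at hpr; simp [proj] at hpr
            | cons b u'' =>
              have hbSo : b ∈ So := hpriv i b u'' hui
              rw [hui] at hpr
              simp only [proj, if_pos hbSo] at hpr
              have hba : b = a := by injection hpr
              subst hba
              have hpi := hpath i
              rw [hui] at hpi
              obtain ⟨r, hr, hrw⟩ := hpi
              exact ⟨r, u'', fun _ => ⟨hr, rfl, hrw⟩ , fun h => absurd hi h⟩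
          · exact ⟨p i, u i, fun h => absurd h hi, fun _ => ⟨rfl, rfl⟩⟩
        choose r u' hkey using key
        have hsle : ∑ j, (u' j).length ≤ ∑ j, (u j).length := by
          refine Finset.sum_le_sum (fun j _ => ?_)
          by_cases hj : a ∈ S j
          · rw [((hkey j).1 hj).2.1]; simp
          · rw [((hkey j).2 hj).2]
        obtain ⟨w, hw, hpw⟩ := ih v' u' r q
          (fun b hb => hv b (List.mem_cons_of_mem a hb))
          (by
            intro j b hb
            by_cases hj : a ∈ S j
            · exact hu j b (by rw [((hkey j).1 hj).2.1]; exact List.mem_cons_of_mem a hb)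
            · exact hu j b (by rwa [← ((hkey j).2 hj).2]))
          (by
            intro j
            by_cases hj : a ∈ S j
            · have h1 := hproj j
              rw [((hkey j).1 hj).2.1] at h1
              simp only [proj, if_pos haSo, if_pos (Set.mem_inter hj haSo)] at h1
              injection h1
            · have h2 : a ∉ S j ∩ So := fun h => hj h.1
              have h1 := hproj j
              simp only [proj, if_neg h2] at h1
              rw [((hkey j).2 hj).2, h1])
          (by
            intro j
            by_cases hj : a ∈ S j
            · exact ((hkey j).1 hj).2.2
            · rw [((hkey j).2 hj).1, ((hkey j).2 hj).2]; exact hpath j)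
          (by simp at hN; omega)
        refine ⟨a :: w, by simp [proj, haSo, hw], ?_⟩
        refine ⟨r, ⟨⟨i₀, hai₀⟩, fun j => ⟨fun hj => ((hkey j).1 hj).1,
          fun hj => ((hkey j).2 hj).1⟩⟩, hpw⟩

/-- if all pairwise shared events are observable, then projection
commutes with parallel composition:
`P(L(G₁ ‖ ⋯ ‖ Gₙ)) = P(L(G₁)) ‖ ⋯ ‖ P(L(Gₙ))`, where the right-hand side is the
parallel composition of languages over the alphabets `Σᵢ ∩ Σ_o` (defined via
inverse projections). -/
theorem proj_lang_parN_eq_parN_proj_langs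
    {n : ℕ} {E : Type} {Qs : Fin n → Type}
    (S : Fin n → Set E) (So : Set E) (A : ∀ i, NFA' (Qs i) E)
    (hshared : ∀ i j, i ≠ j → S i ∩ S j ⊆ So)
    (hown : ∀ i (q : Qs i) (a : E), a ∉ S i → (A i).δ q a = ∅) :
    proj So '' (parN S A).lang =
      {v : List E | (∀ a ∈ v, ∃ i, a ∈ S i ∩ So) ∧
        ∀ i, proj (S i ∩ So) v ∈ proj So '' (A i).lang} := by
  ext v
  constructor
  · rintro ⟨w, hw, rfl⟩
    obtain ⟨p, hpI, q, hpq⟩ := (lang_iff _ w).1 hw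
    constructor
    · intro a ha
      rw [mem_proj] at ha
      obtain ⟨i, hi⟩ := parN_path_mem S A w p q hpq a ha.1
      exact ⟨i, hi, ha.2⟩
    · intro i
      refine ⟨proj (S i) w, (lang_iff _ _).2 ⟨p i, hpI i, q i,
        parN_path_proj S A w p q hpq i⟩, ?_⟩
      rw [proj_proj, proj_proj, Set.inter_comm So (S i), Set.inter_assoc,
        Set.inter_self]
  · rintro ⟨hv, hV⟩
    have key : ∀ i, ∃ (u : List E) (p q : Qs i),
        p ∈ (A i).I ∧ (A i).path p u q ∧ proj So u = proj (S i ∩ So) v := by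
      intro i
      obtain ⟨u, hu, hpu⟩ := hV i
      obtain ⟨p, hpI, q, hpq⟩ := (lang_iff _ u).1 hu
      exact ⟨u, p, q, hpI, hpq, hpu⟩
    choose u p q hpI hpq hprj using key
    obtain ⟨w, hw, hpw⟩ := construct S So A hshared
      (v.length + ∑ i, (u i).length) v u p q hv
      (fun i a ha => path_mem_own (A i) (S i) (hown i) (u i) (p i) (q i) (hpq i) a ha)
      hprj hpq le_rfl
    exact ⟨w, (lang_iff _ w).2 ⟨p, hpI, q, hpw⟩, hw⟩
end

section
/- Let G be a DES with no unobservable cycles and deadlock free. Then every infinite trajectory s ∈ L^ω(G) has, for every n ∈ ℕ, a finite prefix t with |P(t)| > n; that is, observations along any infinite trajectory grow unboundedly. -/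
/-- The prefix of length `m` of an infinite event sequence. -/
def pref {E : Type} (s : ℕ → E) (m : ℕ) : List E := List.ofFn fun i : Fin m => s i

/-- The segment of an infinite event sequence between positions `m` and `m'`. -/
def seg {E : Type} (s : ℕ → E) (m m' : ℕ) : List E :=
  List.ofFn fun i : Fin (m' - m) => s (m + i)

/-- `s` is an infinite trajectory of the system: all its finite prefixes are generated. -/
def InfTraj {Q E : Type} (A : NFA' Q E) (s : ℕ → E) : Prop :=
  ∀ m : ℕ, pref s m ∈ A.lang

/-- The current-state estimate `R_G(t)` after observing `P(t)`,
where `So` is the set of observable events. -/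
def Rst {Q E : Type} (A : NFA' Q E) (So : Set E) (t : List E) : Set Q :=
  {x | ∃ t' ∈ A.lang, proj So t' = proj So t ∧ x ∈ A.run t' A.I}

/-- The system is deadlock free: every state enables some event. -/
def DeadlockFree {Q E : Type} (A : NFA' Q E) : Prop :=
  ∀ q : Q, ∃ a : E, (A.δ q a).Nonempty

/-- No cycle consists solely of unobservable events
(`So` is the set of observable events). -/
def NoUnobservableCycle {Q E : Type} (A : NFA' Q E) (So : Set E) : Prop :=
  ∀ (q : Q) (w : List E), w ≠ [] → (∀ a ∈ w, a ∉ So) → q ∉ A.run w {q}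

/-- Weak detectability w.r.t. the observable events `So`. -/
def WeaklyDetectable {Q E : Type} (A : NFA' Q E) (So : Set E) : Prop :=
  ∃ n : ℕ, ∃ s : ℕ → E, InfTraj A s ∧
    ∀ m : ℕ, (proj So (pref s m)).length > n → ∃ x, Rst A So (pref s m) = {x}

/-- Strong detectability w.r.t. the observable events `So`. -/
def StronglyDetectable {Q E : Type} (A : NFA' Q E) (So : Set E) : Prop :=
  ∃ n : ℕ, ∀ s : ℕ → E, InfTraj A s →
    ∀ m : ℕ, (proj So (pref s m)).length > n → ∃ x, Rst A So (pref s m) = {x}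

/-- Weak periodic detectability w.r.t. the observable events `So`. -/
def WeaklyPeriodicallyDetectable {Q E : Type} (A : NFA' Q E) (So : Set E) : Prop :=
  ∃ n : ℕ, ∃ s : ℕ → E, InfTraj A s ∧
    ∀ m : ℕ, ∃ m' : ℕ, m ≤ m' ∧ (proj So (seg s m m')).length < n ∧
      ∃ x, Rst A So (pref s m') = {x}

/-- Strong periodic detectability w.r.t. the observable events `So`. -/
def StronglyPeriodicallyDetectable {Q E : Type} (A : NFA' Q E) (So : Set E) : Prop :=
  ∃ n : ℕ, ∀ s : ℕ → E, InfTraj A s →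
    ∀ m : ℕ, ∃ m' : ℕ, m ≤ m' ∧ (proj So (seg s m m')).length < n ∧
      ∃ x, Rst A So (pref s m') = {x}

lemma NFA'.run_append {Q E : Type} (A : NFA' Q E) (u v : List E) (S : Set Q) :
    A.run (u ++ v) S = A.run v (A.run u S) := by
  induction u generalizing S with
  | nil => rfl
  | cons a u ih => simp [NFA'.run, ih]

lemma pref_succ {E : Type} (s : ℕ → E) (m : ℕ) :
    pref s (m + 1) = pref s m ++ [s m] := by
  rw [pref, List.ofFn_succ', List.concat_eq_append, pref]
  simp [Fin.last]

lemma proj_append {E : Type} (S : Set E) (u v : List E) :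
    proj S (u ++ v) = proj S u ++ proj S v := by
  induction u with
  | nil => rfl
  | cons a u ih =>
    simp only [List.cons_append, proj]
    split_ifs <;> simp [ih]

lemma seg_same {E : Type} (s : ℕ → E) (m : ℕ) : seg s m m = [] := by
  simp [seg]

lemma seg_succ {E : Type} (s : ℕ → E) (m d : ℕ) :
    seg s m (m + d + 1) = seg s m (m + d) ++ [s (m + d)] := by
  simp only [seg, Nat.add_sub_cancel_left, show m + d + 1 - m = d + 1 by omega]
  rw [List.ofFn_succ', List.concat_eq_append]
  simp [Fin.last]

lemma chain_exists {Q E : Type} (A : NFA' Q E) (s : ℕ → E) (M : ℕ) :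
    ∀ L q, q ∈ A.run (pref s (M + L)) A.I →
      ∃ c : ℕ → Q, c L = q ∧ ∀ k < L, c (k + 1) ∈ A.δ (c k) (s (M + k)) := by
  intro L
  induction L with
  | zero =>
    intro q _
    exact ⟨fun _ => q, rfl, fun k hk => absurd hk (Nat.not_lt_zero k)⟩
  | succ L ih =>
    intro q hq
    rw [show M + (L + 1) = (M + L) + 1 by omega, pref_succ, A.run_append] at hq
    simp only [NFA'.run, Set.mem_setOf_eq] at hq
    obtain ⟨p, hp, hpq⟩ := hq
    obtain ⟨c, hc0, hcs⟩ := ih p hp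
    refine ⟨fun k => if k = L + 1 then q else c k, by simp, ?_⟩
    intro k hk
    rcases Nat.lt_succ_iff_lt_or_eq.mp hk with h | h
    · show (if k + 1 = L + 1 then q else c (k + 1)) ∈
        A.δ (if k = L + 1 then q else c k) (s (M + k))
      rw [if_neg (by omega : k + 1 ≠ L + 1), if_neg (by omega : k ≠ L + 1)]
      exact hcs k h
    · subst h
      show (if k + 1 = k + 1 then q else c (k + 1)) ∈
        A.δ (if k = k + 1 then q else c k) (s (M + k))
      rw [if_pos rfl, if_neg (by omega : k ≠ k + 1), hc0]
      exact hpq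

lemma cycle_run {Q E : Type} (A : NFA' Q E) (s : ℕ → E) (M : ℕ) (c : ℕ → Q) (i : ℕ) :
    ∀ d, (∀ k < i + d, c (k + 1) ∈ A.δ (c k) (s (M + k))) →
      c (i + d) ∈ A.run (seg s (M + i) (M + i + d)) {c i} := by
  intro d
  induction d with
  | zero => simp [seg_same, NFA'.run]
  | succ d ih =>
    intro hc
    rw [show M + i + (d + 1) = (M + i) + d + 1 by omega, seg_succ,
      show (M + i) + d = M + i + d by omega, A.run_append]
    simp only [NFA'.run, Set.mem_setOf_eq]
    refine ⟨c (i + d), ih (fun k hk => hc k (by omega)), ?_⟩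
    have := hc (i + d) (by omega)
    rwa [show M + (i + d) = M + i + d by omega, show i + d + 1 = i + (d + 1) by omega] at this

/-- in a finite-state, deadlock-free DES with no unobservable
cycles, observations along any infinite trajectory grow unboundedly: every
infinite trajectory has, for every `n`, a finite prefix whose observation is
longer than `n`. -/
theorem observations_grow_unboundedly {Q E : Type} [Fintype Q]
    (A : NFA' Q E) (Suo : Set E)
    (hdf : DeadlockFree A) (hnc : NoUnobservableCycle A Suoᶜ)
    (s : ℕ → E) (hs : InfTraj A s) (n : ℕ) :
    ∃ m : ℕ, (proj Suoᶜ (pref s m)).length > n := by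
  classical
  set f : ℕ → ℕ := fun m => (proj Suoᶜ (pref s m)).length with hf
  have hstep : ∀ m, f (m + 1) = if s m ∈ Suoᶜ then f m + 1 else f m := by
    intro m
    simp only [hf, pref_succ, proj_append, List.length_append]
    by_cases h : s m ∈ Suoᶜ <;> simp [proj, h]
  have hmono : Monotone f := by
    apply monotone_nat_of_le_succ
    intro m
    rw [hstep m]
    split_ifs <;> omega
  -- Core lemma: f grows beyond any current value
  have hcore : ∀ m, ∃ m', f m' > f m := by
    intro m
    by_contra hcon
    push_neg at hcon
    -- then all events from position m on are unobservable
    have huo : ∀ k, m ≤ k → s k ∉ Suoᶜ := by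
      intro k hk hobs
      have h1 : f (k + 1) = f k + 1 := by rw [hstep k, if_pos hobs]
      have h2 : f m ≤ f k := hmono hk
      have := hcon (k + 1)
      omega
    -- build a chain of states and find an unobservable cycle
    set L := Fintype.card Q with hL
    have hne : (A.run (pref s (m + L)) A.I).Nonempty := hs (m + L)
    obtain ⟨q, hq⟩ := hne
    obtain ⟨c, _, hcs⟩ := chain_exists A s m L q hq
    have hcard : Fintype.card Q < Fintype.card (Fin (L + 1)) := by simp [hL]
    obtain ⟨i, j, hij, heq⟩ :=
      Fintype.exists_ne_map_eq_of_card_lt (fun k : Fin (L + 1) => c k) hcard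
    -- wlog i < j
    wlog hlt : (i : ℕ) < (j : ℕ) generalizing i j
    · exact this j i (Ne.symm hij) heq.symm
        (by rcases Nat.lt_or_ge (j : ℕ) (i : ℕ) with h | h
            · exact h
            · exfalso; exact hij (Fin.ext (by omega)))
    obtain ⟨d, hd⟩ : ∃ d, (j : ℕ) = (i : ℕ) + d := ⟨j - i, by omega⟩
    have hd1 : 1 ≤ d := by omega
    have hjL : (i : ℕ) + d ≤ L := by have := j.isLt; omega
    have hcyc : c ((i : ℕ) + d) ∈ A.run (seg s (m + i) (m + i + d)) {c (i : ℕ)} :=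
      cycle_run A s m c i d (fun k hk => hcs k (by omega))
    rw [← hd, ← heq] at hcyc
    refine hnc (c (i : ℕ)) (seg s (m + i) (m + i + d)) ?_ ?_ hcyc
    · have : (seg s (m + i) (m + i + d)).length = d := by
        simp [seg, Nat.add_sub_cancel_left, show m + i + d - (m + i) = d by omega]
      intro hnil
      rw [hnil] at this
      simp at this
      omega
    · intro a ha
      simp only [seg, List.mem_ofFn, Set.mem_range] at ha
      obtain ⟨k, hk⟩ := ha
      rw [← hk]
      exact huo (m + i + k) (by omega)
  -- conclude by induction on n
  clear hdf
  induction n with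
  | zero =>
    obtain ⟨m', hm'⟩ := hcore 0
    have e1 : f m' = (proj Suoᶜ (pref s m')).length := rfl
    exact ⟨m', by omega⟩
  | succ n ih =>
    obtain ⟨m, hm⟩ := ih
    obtain ⟨m', hm'⟩ := hcore m
    have e1 : f m' = (proj Suoᶜ (pref s m')).length := rfl
    have e2 : f m = (proj Suoᶜ (pref s m)).length := rfl
    exact ⟨m', by omega⟩
end
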